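/- Let k ≥ 2 be an integer, m an integer with m ≥ 2¹¹·k⁴, λ := 1/(10·log₂ m + 5), and x ∈ ℝⁿ with λ < x_i ≤ 1/5 for all i and Σ_i x_i ≤ k. Assign each index i ∈ {1,…,n} independently and uniformly at random to one of m buckets. Then for each fixed bucket b, the probability that Σ_{i assigned to b} x_i > 3/5 is at most 1/(2m²). -/

import Mathlib

open MeasureTheory ProbabilityTheory
open scoped ENNReal

/-- Analytic bound: for `M ≥ 2^15`, `10·log₂ M + 5 ≤ 155·(M/2^15)^(1/4)`. -/
lemma aux_log_bound (M : ℝ) (hM : (32768 : ℝ) ≤ M) :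
    10 * Real.logb 2 M + 5 ≤ 155 * (M / 32768) ^ ((1 : ℝ) / 4) := by
  set t := (M / 32768) ^ ((1 : ℝ) / 4) with ht
  have hM0 : (0 : ℝ) < M := by linarith
  have hs : (1 : ℝ) ≤ M / 32768 := by
    rw [le_div_iff₀ (by norm_num)]; linarith
  have ht1 : (1 : ℝ) ≤ t := Real.one_le_rpow hs (by norm_num)
  have ht0 : (0 : ℝ) < t := by linarith
  have ht4 : t ^ (4 : ℕ) = M / 32768 := by
    rw [ht, ← Real.rpow_natCast _ 4, ← Real.rpow_mul (by positivity)]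
    norm_num
  have hMt : M = 32768 * t ^ (4 : ℕ) := by
    rw [ht4]; field_simp
  have hlog32768 : Real.logb 2 (32768 : ℝ) = 15 := by
    have : (32768 : ℝ) = 2 ^ (15 : ℕ) := by norm_num
    rw [this, Real.logb_pow, Real.logb_self_eq_one (by norm_num : (1:ℝ) < 2)]
    norm_num
  have hlogm : Real.logb 2 M = 15 + 4 * Real.logb 2 t := by
    rw [hMt, Real.logb_mul (by norm_num) (by positivity), hlog32768, Real.logb_pow]
    push_cast; ring
  have hL : (0 : ℝ) < Real.log 2 := Real.log_pos one_lt_two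
  have hlt : Real.logb 2 t ≤ (t - 1) / Real.log 2 := by
    rw [Real.logb]
    gcongr
    exact Real.log_le_sub_one_of_pos ht0
  have h40 : 40 * ((t - 1) / Real.log 2) ≤ 150 * (t - 1) := by
    rw [← mul_div_assoc, div_le_iff₀ hL]
    nlinarith [Real.log_two_gt_d9]
  have : 10 * Real.logb 2 M + 5 ≤ 155 + 150 * (t - 1) := by
    rw [hlogm]
    nlinarith [hlt]
  linarith

theorem statement11 (k m n : ℕ) (hk : 2 ≤ k) (hm : 2 ^ 11 * k ^ 4 ≤ m)
    (x : Fin n → ℝ)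
    (hx : ∀ i, 1 / (10 * Real.logb 2 m + 5) < x i ∧ x i ≤ 1 / 5)
    (hsum : ∑ i, x i ≤ (k : ℝ))
    (Ω : Type) [MeasurableSpace Ω] (μ : Measure Ω) [IsProbabilityMeasure μ]
    (B : Fin n → Ω → Fin m)
    (hmeas : ∀ i, Measurable (B i))
    (hindep : iIndepFun B μ)
    (hunif : ∀ (i : Fin n) (b : Fin m), μ {ω | B i ω = b} = 1 / (m : ℝ≥0∞))
    (b : Fin m) :
    μ {ω | (3 : ℝ) / 5 < ∑ i ∈ Finset.univ.filter (fun i => B i ω = b), x i}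
      ≤ 1 / (2 * (m : ℝ≥0∞) ^ 2) := by
  -- basic size facts
  have hm15 : 32768 ≤ m := by
    calc 32768 = 2 ^ 11 * 2 ^ 4 := by norm_num
    _ ≤ 2 ^ 11 * k ^ 4 := by gcongr
    _ ≤ m := hm
  have hmR : (32768 : ℝ) ≤ (m : ℝ) := by exact_mod_cast hm15
  set L := Real.logb 2 (m : ℝ) with hLdef
  have hL15 : (15 : ℝ) ≤ L := by
    rw [hLdef, show (15:ℝ) = Real.logb 2 (32768:ℝ) by
      rw [show (32768:ℝ) = 2 ^ (15:ℕ) by norm_num, Real.logb_pow,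
        Real.logb_self_eq_one (by norm_num : (1:ℝ) < 2)]; norm_num]
    exact Real.logb_le_logb_of_le (by norm_num) (by norm_num) hmR
  have hP0 : (0 : ℝ) < 10 * L + 5 := by linarith
  -- bound on n
  have hnP : (n : ℝ) ≤ k * (10 * L + 5) := by
    have h1 : (n : ℝ) * (1 / (10 * L + 5)) ≤ (k : ℝ) := by
      have h2 : ∑ _i : Fin n, (1 / (10 * L + 5)) ≤ ∑ i, x i :=
        Finset.sum_le_sum fun i _ => (hx i).1.le
      rw [Finset.sum_const, Finset.card_univ, Fintype.card_fin, nsmul_eq_mul] at h2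
      linarith
    rw [mul_one_div, div_le_iff₀ hP0] at h1
    linarith [h1]
  -- the key numeric inequality : n^4 ≤ 12 m²
  set t := ((m : ℝ) / 32768) ^ ((1 : ℝ) / 4) with htdef
  have hPt : 10 * L + 5 ≤ 155 * t := aux_log_bound (m : ℝ) hmR
  have ht1 : (1 : ℝ) ≤ t := Real.one_le_rpow (by rw [le_div_iff₀ (by norm_num)]; linarith) (by norm_num)
  have ht4 : t ^ (4 : ℕ) = (m : ℝ) / 32768 := by
    rw [htdef, ← Real.rpow_natCast _ 4, ← Real.rpow_mul (by positivity)]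
    norm_num
  have hk4 : (k : ℝ) ^ 4 ≤ (m : ℝ) / 2048 := by
    have : (2048 : ℝ) * (k : ℝ) ^ 4 ≤ (m : ℝ) := by exact_mod_cast hm
    linarith
  have hn4 : (n : ℝ) ^ 4 ≤ 12 * (m : ℝ) ^ 2 := by
    have hk0 : (0 : ℝ) ≤ (k : ℝ) := by positivity
    have hn155 : (n : ℝ) ≤ (k : ℝ) * (155 * t) := by
      calc (n : ℝ) ≤ k * (10 * L + 5) := hnP
      _ ≤ k * (155 * t) := by gcongr
    have hpow : (n : ℝ) ^ 4 ≤ ((k : ℝ) * (155 * t)) ^ 4 :=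
      pow_le_pow_left₀ (by positivity) hn155 4
    have hexp : ((k : ℝ) * (155 * t)) ^ 4 = 155 ^ 4 * (k : ℝ) ^ 4 * t ^ (4 : ℕ) := by ring
    rw [hexp, ht4] at hpow
    have hk4' : 155 ^ 4 * (k : ℝ) ^ 4 * ((m : ℝ) / 32768)
        ≤ 155 ^ 4 * ((m : ℝ) / 2048) * ((m : ℝ) / 32768) := by
      have hm0 : (0 : ℝ) ≤ (m : ℝ) / 32768 := by positivity
      have := mul_le_mul_of_nonneg_right
        (mul_le_mul_of_nonneg_left hk4 (by norm_num : (0:ℝ) ≤ 155 ^ 4)) hm0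
      linarith [this]
    have : 155 ^ 4 * ((m : ℝ) / 2048) * ((m : ℝ) / 32768) ≤ 12 * (m : ℝ) ^ 2 := by
      nlinarith [sq_nonneg ((m:ℝ))]
    linarith
  -- binomial bound: 2 * C(n,4) ≤ m²
  have hchoose : 2 * n.choose 4 ≤ m ^ 2 := by
    have h24 : 24 * n.choose 4 ≤ n ^ 4 := by
      have h1 := Nat.descFactorial_le_pow n 4
      rw [Nat.descFactorial_eq_factorial_mul_choose] at h1
      simpa [Nat.factorial] using h1
    have h24R : (24 : ℝ) * n.choose 4 ≤ (n : ℝ) ^ 4 := by exact_mod_cast h24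
    have : (2 : ℝ) * n.choose 4 ≤ (m : ℝ) ^ 2 := by linarith
    exact_mod_cast this
  -- measure-theoretic part
  have hm0 : (m : ℝ≥0∞) ≠ 0 := by
    simp only [ne_eq, Nat.cast_eq_zero]; omega
  have hmtop : (m : ℝ≥0∞) ≠ ⊤ := ENNReal.natCast_ne_top m
  set P := Finset.powersetCard 4 (Finset.univ : Finset (Fin n)) with hPdef
  have hsub : {ω | (3 : ℝ) / 5 < ∑ i ∈ Finset.univ.filter (fun i => B i ω = b), x i}
      ⊆ ⋃ S ∈ P, ⋂ i ∈ S, {ω | B i ω = b} := by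
    intro ω hω
    simp only [Set.mem_setOf_eq] at hω
    set T := Finset.univ.filter (fun i => B i ω = b) with hTdef
    have hT4 : 4 ≤ T.card := by
      by_contra h
      push_neg at h
      have hb := Finset.sum_le_card_nsmul T x (1/5) (fun i _ => (hx i).2)
      rw [nsmul_eq_mul] at hb
      have hcard : (T.card : ℝ) ≤ 3 := by exact_mod_cast Nat.lt_succ_iff.mp h
      nlinarith
    obtain ⟨S, hST, hS4⟩ := Finset.exists_subset_card_eq hT4
    exact Set.mem_biUnion (Finset.mem_powersetCard.2 ⟨Finset.subset_univ S, hS4⟩)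
      (Set.mem_iInter₂.2 fun i hi => (Finset.mem_filter.1 (hST hi)).2)
  have hmeasS : ∀ S ∈ P, μ (⋂ i ∈ S, {ω | B i ω = b}) = (1 / (m : ℝ≥0∞)) ^ 4 := by
    intro S hS
    have hcard : S.card = 4 := (Finset.mem_powersetCard.1 hS).2
    rw [hindep.meas_biInter (fun i _ => ⟨{b}, measurableSet_singleton b, by
      ext ω; simp [Set.preimage]⟩)]
    rw [Finset.prod_congr rfl (fun i _ => hunif i b), Finset.prod_const, hcard]
  calc μ {ω | (3 : ℝ) / 5 < ∑ i ∈ Finset.univ.filter (fun i => B i ω = b), x i}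
      ≤ μ (⋃ S ∈ P, ⋂ i ∈ S, {ω | B i ω = b}) := measure_mono hsub
    _ ≤ ∑ S ∈ P, μ (⋂ i ∈ S, {ω | B i ω = b}) := measure_biUnion_finset_le P _
    _ = ∑ _S ∈ P, (1 / (m : ℝ≥0∞)) ^ 4 := Finset.sum_congr rfl hmeasS
    _ = (n.choose 4 : ℝ≥0∞) * (1 / (m : ℝ≥0∞)) ^ 4 := by
        rw [Finset.sum_const, hPdef, Finset.card_powersetCard, Finset.card_univ,
          Fintype.card_fin, nsmul_eq_mul]
    _ = (n.choose 4 : ℝ≥0∞) / (m : ℝ≥0∞) ^ 4 := by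
        rw [one_div, ← ENNReal.inv_pow, div_eq_mul_inv]
    _ ≤ 1 / (2 * (m : ℝ≥0∞) ^ 2) := by
        have hc : (2 : ℝ≥0∞) * (n.choose 4 : ℝ≥0∞) ≤ (m : ℝ≥0∞) ^ 2 := by
          have := hchoose
          exact_mod_cast Nat.cast_le.2 this
        calc (n.choose 4 : ℝ≥0∞) / (m : ℝ≥0∞) ^ 4
            = 2 * (n.choose 4 : ℝ≥0∞) / (2 * (m : ℝ≥0∞) ^ 4) :=
              (ENNReal.mul_div_mul_left _ _ (by norm_num) (by norm_num)).symm
          _ ≤ (m : ℝ≥0∞) ^ 2 / (2 * (m : ℝ≥0∞) ^ 4) := ENNReal.div_le_div_right hc _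
          _ = ((m : ℝ≥0∞) ^ 2 * 1) / ((m : ℝ≥0∞) ^ 2 * (2 * (m : ℝ≥0∞) ^ 2)) := by
              ring_nf
          _ = 1 / (2 * (m : ℝ≥0∞) ^ 2) :=
              ENNReal.mul_div_mul_left _ _ (by positivity) (by
                exact ENNReal.pow_ne_top hmtop)
        done
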